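/- Let T be a proper infinite rooted tree with weight σ and let η ∈ Λ. Then: (i) for every p ∈ (1,∞) with Hölder conjugate q, Mod_{p,σ}(Γ_∞) ≥ (Σ_e σ(e)^{-q/p} η(e)^q)^{-p/q}; (ii) Mod_{1,σ}(Γ_∞) ≥ (sup_e σ(e)^{-1}η(e))^{-1}; (iii) Mod_{∞,σ}(Γ_∞) ≥ (Σ_e σ(e)^{-1}η(e))^{-1}. Here the sums and suprema are over all edges and taken in [0,∞], with the reciprocal of ∞ interpreted as 0. -/

import Mathlib

open scoped ENNReal NNReal

/-- A proper infinite rooted tree, modeled as a prefix-closed set of finite lists of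
naturals in which every node has at least one and finitely many children. -/
structure PTree where
  mem : List ℕ → Prop
  root_mem : mem []
  prefix_closed : ∀ ⦃l₁ l₂ : List ℕ⦄, l₁ <+: l₂ → mem l₂ → mem l₁
  child_exists : ∀ ⦃l⦄, mem l → ∃ a, mem (l ++ [a])
  finite_children : ∀ ⦃l⦄, mem l → {a : ℕ | mem (l ++ [a])}.Finite

/-- The initial segment of length `n` of `f : ℕ → ℕ`, as a list. -/
def seg (f : ℕ → ℕ) (n : ℕ) : List ℕ := (List.range n).map f

namespace PTree

variable (T : PTree)

/-- The edges of the tree: the nonempty lists in `T`. -/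
def Edge : Type := {e : List ℕ // T.mem e ∧ e ≠ []}

/-- The family `Γ_∞` of infinite descending paths: functions all of whose
finite initial segments lie in `T`. -/
def GammaInf : Set (ℕ → ℕ) := {f | ∀ n, T.mem (seg f n)}

/-- `ρ`-length of the infinite descending path determined by `f`: the sum of `ρ`
over the nonempty initial segments of `f`. -/
noncomputable def lenInf (ρ : List ℕ → ℝ≥0) (f : ℕ → ℕ) : ℝ≥0∞ :=
  ∑' n : ℕ, (ρ (seg f (n + 1)) : ℝ≥0∞)

/-- `ρ`-length of the finite descending path `γ_e` consisting of the nonempty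
prefixes of the edge `e`. -/
noncomputable def lenFin (ρ : List ℕ → ℝ≥0) (e : List ℕ) : ℝ≥0∞ :=
  ∑ k ∈ Finset.range e.length, (ρ (e.take (k + 1)) : ℝ≥0∞)

/-- Admissible densities for the family `Γ_n` (identified with the shell `S_n`). -/
def AdmFin (n : ℕ) : Set (List ℕ → ℝ≥0) :=
  {ρ | ∀ e : List ℕ, T.mem e → e.length = n → 1 ≤ lenFin ρ e}

/-- Admissible densities for the family `Γ_∞`. -/
def AdmInf : Set (List ℕ → ℝ≥0) :=
  {ρ | ∀ f ∈ T.GammaInf, 1 ≤ lenInf ρ f}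

/-- The `p`-energy of a density `ρ` with respect to the weight `σ`. -/
noncomputable def energy (p : ℝ) (σ ρ : List ℕ → ℝ≥0) : ℝ≥0∞ :=
  ∑' e : T.Edge, (σ e.1 : ℝ≥0∞) * (ρ e.1 : ℝ≥0∞) ^ p

/-- The `∞`-energy of a density `ρ` with respect to the weight `σ`. -/
noncomputable def energyTop (σ ρ : List ℕ → ℝ≥0) : ℝ≥0∞ :=
  ⨆ e : T.Edge, (σ e.1 : ℝ≥0∞) * (ρ e.1 : ℝ≥0∞)

/-- The `p`-modulus of the family `Γ_n`. -/
noncomputable def ModFin (p : ℝ) (σ : List ℕ → ℝ≥0) (n : ℕ) : ℝ≥0∞ :=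
  ⨅ ρ ∈ T.AdmFin n, T.energy p σ ρ

/-- The `p`-modulus of the family `Γ_∞`. -/
noncomputable def ModInf (p : ℝ) (σ : List ℕ → ℝ≥0) : ℝ≥0∞ :=
  ⨅ ρ ∈ T.AdmInf, T.energy p σ ρ

/-- The `∞`-modulus of the family `Γ_∞`. -/
noncomputable def ModTop (σ : List ℕ → ℝ≥0) : ℝ≥0∞ :=
  ⨅ ρ ∈ T.AdmInf, T.energyTop σ ρ

end PTree

namespace PTree

variable (T : PTree)

/-- The set `Λ` of unit flows from the root: nonnegative functions on edges whose
values on the first shell sum to `1` and whose value on each edge equals the sum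
of the values on its children. -/
def Lambda : Set (List ℕ → ℝ≥0) :=
  {η | (∑' e : {l : List ℕ // T.mem l ∧ l.length = 1}, (η e.1 : ℝ≥0∞)) = 1 ∧
    ∀ e : List ℕ, T.mem e → e ≠ [] →
      (∑' a : {a : ℕ // T.mem (e ++ [a])}, (η (e ++ [a.1]) : ℝ≥0∞)) = (η e : ℝ≥0∞)}

end PTree


open scoped ENNReal NNReal

section Aux

/-- Hölder's inequality for `tsum` in `ℝ≥0∞`. -/
lemma tsum_holder {ι : Type*} (f g : ι → ℝ≥0∞) {p q : ℝ} (hpq : Real.HolderConjugate p q) :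
    ∑' i, f i * g i ≤ (∑' i, f i ^ p) ^ (1/p) * (∑' i, g i ^ q) ^ (1/q) := by
  letI : MeasurableSpace ι := ⊤
  haveI : MeasurableSingletonClass ι := ⟨fun _ => trivial⟩
  have hf : AEMeasurable f (MeasureTheory.Measure.count) :=
    (show Measurable f from fun _ _ => trivial).aemeasurable
  have hg : AEMeasurable g (MeasureTheory.Measure.count) :=
    (show Measurable g from fun _ _ => trivial).aemeasurable
  simpa [MeasureTheory.lintegral_count] using
    ENNReal.lintegral_mul_le_Lp_mul_Lq MeasureTheory.Measure.count hpq hf hg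

lemma seg_zero (f : ℕ → ℕ) : seg f 0 = [] := rfl

lemma seg_succ (f : ℕ → ℕ) (n : ℕ) : seg f (n + 1) = seg f n ++ [f n] := by
  simp [seg, List.range_succ]

lemma seg_length (f : ℕ → ℕ) (n : ℕ) : (seg f n).length = n := by simp [seg]

lemma seg_take (f : ℕ → ℕ) {m n : ℕ} (h : m ≤ n) : (seg f n).take m = seg f m := by
  simp [seg, ← List.map_take, List.take_range, Nat.min_eq_left h]

namespace PTree

variable (T : PTree)

lemma lenFin_concat (ρ : List ℕ → ℝ≥0) (l : List ℕ) (a : ℕ) :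
    lenFin ρ (l ++ [a]) = lenFin ρ l + ρ (l ++ [a]) := by
  unfold lenFin
  have hlen : (l ++ [a]).length = l.length + 1 := by simp
  rw [hlen, Finset.sum_range_succ]
  congr 1
  · refine Finset.sum_congr rfl fun k hk => ?_
    have : k + 1 ≤ l.length := by
      have := Finset.mem_range.1 hk; omega
    rw [List.take_append_of_le_length this]
  · rw [← hlen, List.take_length]

lemma lenFin_mono (ρ : List ℕ → ℝ≥0) {l l' : List ℕ} (h : l <+: l') :
    lenFin ρ l ≤ lenFin ρ l' := by
  obtain ⟨t, rfl⟩ := h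
  unfold lenFin
  have hle : l.length ≤ (l ++ t).length := by simp
  calc ∑ k ∈ Finset.range l.length, (ρ (l.take (k + 1)) : ℝ≥0∞)
      = ∑ k ∈ Finset.range l.length, (ρ ((l ++ t).take (k + 1)) : ℝ≥0∞) := by
        refine Finset.sum_congr rfl fun k hk => ?_
        have : k + 1 ≤ l.length := by have := Finset.mem_range.1 hk; omega
        rw [List.take_append_of_le_length this]
    _ ≤ _ := Finset.sum_le_sum_of_subset (Finset.range_subset_range.2 hle)

lemma lenFin_seg (ρ : List ℕ → ℝ≥0) (f : ℕ → ℕ) (n : ℕ) :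
    lenFin ρ (seg f n) = ∑ k ∈ Finset.range n, (ρ (seg f (k + 1)) : ℝ≥0∞) := by
  unfold lenFin
  rw [seg_length]
  refine Finset.sum_congr rfl fun k hk => ?_
  have : k + 1 ≤ n := by have := Finset.mem_range.1 hk; omega
  rw [seg_take f this]

lemma lenInf_eq_iSup (ρ : List ℕ → ℝ≥0) (f : ℕ → ℕ) :
    lenInf ρ f = ⨆ n, lenFin ρ (seg f n) := by
  unfold lenInf
  rw [ENNReal.tsum_eq_iSup_nat]
  exact iSup_congr fun n => (lenFin_seg ρ f n).symm

/-- The bijection from (node of generation `n`, child) to nodes of generation `n+1`. -/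
lemma shell_bij (n : ℕ) :
    Function.Bijective
      (fun x : Σ l : {l : List ℕ // T.mem l ∧ l.length = n},
          {a : ℕ // T.mem (l.1 ++ [a])} =>
        (⟨x.1.1 ++ [x.2.1], x.2.2, by simp [x.1.2.2]⟩ :
          {l : List ℕ // T.mem l ∧ l.length = n + 1})) := by
  constructor
  · rintro ⟨⟨l₁, h₁⟩, ⟨a₁, ha₁⟩⟩ ⟨⟨l₂, h₂⟩, ⟨a₂, ha₂⟩⟩ h
    have h' : l₁ ++ [a₁] = l₂ ++ [a₂] := congrArg Subtype.val h
    have hl : l₁ = l₂ := by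
      have := congrArg List.dropLast h'
      simpa [List.dropLast_concat] using this
    subst hl
    have ha : a₁ = a₂ := by simpa using h'
    subst ha
    rfl
  · rintro ⟨l, hl, hlen⟩
    have hne : l ≠ [] := by
      intro h; subst h; simp at hlen
    refine ⟨⟨⟨l.dropLast, T.prefix_closed (List.dropLast_prefix l) hl, by
        simp [List.length_dropLast, hlen]⟩,
      ⟨l.getLast hne, by rwa [List.dropLast_append_getLast hne]⟩⟩, ?_⟩
    exact Subtype.ext (List.dropLast_append_getLast hne)

/-- The bijection from pairs (generation, node of that generation) to edges. -/
lemma edge_bij :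
    Function.Bijective
      (fun x : Σ k : ℕ, {l : List ℕ // T.mem l ∧ l.length = k + 1} =>
        (⟨x.2.1, x.2.2.1, by
          have := x.2.2.2
          intro h; rw [h] at this; simp at this⟩ : T.Edge)) := by
  constructor
  · rintro ⟨k₁, ⟨l₁, h₁⟩⟩ ⟨k₂, ⟨l₂, h₂⟩⟩ h
    have h' : l₁ = l₂ := congrArg Subtype.val h
    subst h'
    have hk : k₁ = k₂ := by
      have e1 := h₁.2
      have e2 := h₂.2
      omega
    subst hk
    rfl
  · rintro ⟨l, hl, hne⟩
    have : l.length ≠ 0 := fun h => hne (List.length_eq_zero_iff.1 h)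
    exact ⟨⟨l.length - 1, ⟨l, hl, by omega⟩⟩, rfl⟩

end PTree

end Aux

section Main

namespace PTree

variable (T : PTree)

/-- Flow conservation: the total flow through each shell is `1`. -/
lemma shell_sum {η : List ℕ → ℝ≥0} (hη : η ∈ T.Lambda) (n : ℕ) :
    ∑' l : {l : List ℕ // T.mem l ∧ l.length = n + 1}, (η l.1 : ℝ≥0∞) = 1 := by
  induction n with
  | zero => exact hη.1
  | succ n ih =>
    rw [← Equiv.tsum_eq (Equiv.ofBijective _ (T.shell_bij (n + 1)))
      (fun l : {l : List ℕ // T.mem l ∧ l.length = n + 2} => (η l.1 : ℝ≥0∞))]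
    rw [ENNReal.tsum_sigma']
    calc (∑' (l : {l : List ℕ // T.mem l ∧ l.length = n + 1})
            (a : {a : ℕ // T.mem (l.1 ++ [a])}), (η (l.1 ++ [a.1]) : ℝ≥0∞))
        = ∑' l : {l : List ℕ // T.mem l ∧ l.length = n + 1}, (η l.1 : ℝ≥0∞) := by
          refine tsum_congr fun l => ?_
          refine hη.2 l.1 l.2.1 ?_
          intro h; have := l.2.2; rw [h] at this; simp at this
      _ = 1 := ih

/-- The `ηρ`-sums over the first `n+1` shells add up to the `η`-weighted sum of
`lenFin` over the shell `n+1`. -/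
lemma shell_lenFin_sum {η : List ℕ → ℝ≥0} (hη : η ∈ T.Lambda) (ρ : List ℕ → ℝ≥0) (n : ℕ) :
    ∑' l : {l : List ℕ // T.mem l ∧ l.length = n + 1}, (η l.1 : ℝ≥0∞) * lenFin ρ l.1
      = ∑ k ∈ Finset.range (n + 1),
          ∑' l : {l : List ℕ // T.mem l ∧ l.length = k + 1}, (η l.1 : ℝ≥0∞) * (ρ l.1 : ℝ≥0∞) := by
  induction n with
  | zero =>
    rw [Finset.sum_range_one]
    refine tsum_congr fun l => ?_
    congr 1
    have h1 : l.1.length = 1 := l.2.2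
    unfold lenFin
    rw [h1, Finset.sum_range_one, List.take_of_length_le (le_of_eq h1)]
  | succ n ih =>
    rw [Finset.sum_range_succ, ← ih]
    rw [← Equiv.tsum_eq (Equiv.ofBijective _ (T.shell_bij (n + 1)))
      (fun l : {l : List ℕ // T.mem l ∧ l.length = n + 2} =>
        (η l.1 : ℝ≥0∞) * lenFin ρ l.1)]
    rw [← Equiv.tsum_eq (Equiv.ofBijective _ (T.shell_bij (n + 1)))
      (fun l : {l : List ℕ // T.mem l ∧ l.length = n + 2} =>
        (η l.1 : ℝ≥0∞) * (ρ l.1 : ℝ≥0∞))]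
    rw [ENNReal.tsum_sigma', ENNReal.tsum_sigma', ← ENNReal.tsum_add]
    refine tsum_congr fun l => ?_
    have hcons : (∑' a : {a : ℕ // T.mem (l.1 ++ [a])}, (η (l.1 ++ [a.1]) : ℝ≥0∞))
        = (η l.1 : ℝ≥0∞) := by
      refine hη.2 l.1 l.2.1 ?_
      intro h; have := l.2.2; rw [h] at this; simp at this
    calc (∑' a : {a : ℕ // T.mem (l.1 ++ [a])},
            (η (l.1 ++ [a.1]) : ℝ≥0∞) * lenFin ρ (l.1 ++ [a.1]))
        = ∑' a : {a : ℕ // T.mem (l.1 ++ [a])},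
            ((η (l.1 ++ [a.1]) : ℝ≥0∞) * lenFin ρ l.1
              + (η (l.1 ++ [a.1]) : ℝ≥0∞) * (ρ (l.1 ++ [a.1]) : ℝ≥0∞)) := by
          refine tsum_congr fun a => ?_
          rw [lenFin_concat, mul_add]
      _ = (∑' a : {a : ℕ // T.mem (l.1 ++ [a])}, (η (l.1 ++ [a.1]) : ℝ≥0∞) * lenFin ρ l.1)
            + ∑' a : {a : ℕ // T.mem (l.1 ++ [a])},
                (η (l.1 ++ [a.1]) : ℝ≥0∞) * (ρ (l.1 ++ [a.1]) : ℝ≥0∞) :=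
          ENNReal.tsum_add
      _ = (η l.1 : ℝ≥0∞) * lenFin ρ l.1
            + ∑' a : {a : ℕ // T.mem (l.1 ++ [a])},
                (η (l.1 ++ [a.1]) : ℝ≥0∞) * (ρ (l.1 ++ [a.1]) : ℝ≥0∞) := by
          rw [ENNReal.tsum_mul_right, hcons]

/-- Sum over all edges of a nonnegative function equals the sum over shells. -/
lemma edge_tsum (g : List ℕ → ℝ≥0∞) :
    ∑' e : T.Edge, g e.1
      = ∑' k : ℕ, ∑' l : {l : List ℕ // T.mem l ∧ l.length = k + 1}, g l.1 := by
  calc ∑' e : T.Edge, g e.1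
      = ∑' x : Σ k : ℕ, {l : List ℕ // T.mem l ∧ l.length = k + 1}, g x.2.1 :=
        (Equiv.tsum_eq (Equiv.ofBijective _ T.edge_bij) (fun e : T.Edge => g e.1)).symm
    _ = ∑' k : ℕ, ∑' l : {l : List ℕ // T.mem l ∧ l.length = k + 1}, g l.1 :=
        ENNReal.tsum_sigma' _

/-- König-type lemma: for an admissible density and any `c < 1`, some shell has
all its `lenFin`-values at least `c`. -/
lemma exists_good_level {ρ : List ℕ → ℝ≥0} (hρ : ρ ∈ T.AdmInf) {c : ℝ≥0∞} (hc : c < 1) :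
    ∃ n : ℕ, ∀ l : List ℕ, T.mem l → l.length = n + 1 → c ≤ lenFin ρ l := by
  classical
  set B : Set (List ℕ) := {l | T.mem l ∧ l ≠ [] ∧ lenFin ρ l < c} with hB
  have hBfin : B.Finite := by
    by_contra hinf
    -- "big" nodes: have infinitely many descendants in B
    set Big : List ℕ → Prop := fun l => T.mem l ∧ {l' ∈ B | l <+: l'}.Infinite with hBig
    have bigRoot : Big [] := by
      refine ⟨T.root_mem, ?_⟩
      have : {l' ∈ B | [] <+: l'} = B := by
        ext l'; simp [List.nil_prefix]
      rwa [this]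
    have bigStep : ∀ l, Big l → ∃ a, T.mem (l ++ [a]) ∧ Big (l ++ [a]) := by
      intro l hl
      by_contra hno
      push_neg at hno
      have hfin : {l' ∈ B | l <+: l'}.Finite := by
        have hsub : {l' ∈ B | l <+: l'} ⊆
            insert l (⋃ a ∈ {a : ℕ | T.mem (l ++ [a])}, {l' ∈ B | l ++ [a] <+: l'}) := by
          rintro l' ⟨hl'B, hpre⟩
          rcases eq_or_ne l' l with rfl | hne
          · exact Set.mem_insert _ _
          · obtain ⟨t, rfl⟩ := hpre
            have ht : t ≠ [] := by rintro rfl; simp at hne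
            obtain ⟨b, t', rfl⟩ := List.exists_cons_of_ne_nil ht
            refine Set.mem_insert_iff.2 (Or.inr ?_)
            refine Set.mem_biUnion (show T.mem (l ++ [b]) from ?_) ⟨hl'B, ⟨t', by simp⟩⟩
            refine T.prefix_closed ⟨t', by simp⟩ hl'B.1
        refine Set.Finite.subset (Set.Finite.insert l ?_) hsub
        refine Set.Finite.biUnion (T.finite_children hl.1) fun a ha => ?_
        have h1 : ¬ (T.mem (l ++ [a]) ∧ {l' ∈ B | l ++ [a] <+: l'}.Infinite) := hno a ha
        exact Set.not_infinite.1 fun hi => h1 ⟨ha, hi⟩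
      exact hl.2 hfin
    -- build an infinite descending path inside B
    choose step hstep using bigStep
    let rec' : ℕ → {l : List ℕ // Big l} := fun n =>
      Nat.rec ⟨[], bigRoot⟩ (fun _ p => ⟨p.1 ++ [step p.1 p.2], (hstep p.1 p.2).2⟩) n
    set f : ℕ → ℕ := fun n => step (rec' n).1 (rec' n).2 with hf
    have hseg : ∀ n, seg f n = (rec' n).1 := by
      intro n
      induction n with
      | zero => rfl
      | succ n ih => rw [seg_succ, ih]
    have hmemB : ∀ n, (rec' n).1 ∈ B ∨ (rec' n).1 = [] := by
      intro n
      rcases eq_or_ne (rec' n).1 [] with h | h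
      · exact Or.inr h
      · left
        obtain ⟨l', hl'⟩ := (rec' n).2.2.nonempty
        exact ⟨(rec' n).2.1, h, lt_of_le_of_lt (lenFin_mono ρ hl'.2) hl'.1.2.2⟩
    have hfGamma : f ∈ T.GammaInf := by
      intro n; rw [hseg]; exact (rec' n).2.1
    have hlen : lenInf ρ f ≤ c := by
      rw [lenInf_eq_iSup]
      refine iSup_le fun n => ?_
      rw [hseg]
      rcases hmemB n with h | h
      · exact le_of_lt h.2.2
      · rw [h]
        simp [lenFin]
    exact absurd (le_trans (hρ f hfGamma) hlen) (not_le.2 hc)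
  -- now take a level beyond all of B
  refine ⟨hBfin.toFinset.sup List.length, fun l hmem hlen => ?_⟩
  by_contra hlt
  push_neg at hlt
  have hlB : l ∈ B := ⟨hmem, by intro h; rw [h] at hlen; simp at hlen, hlt⟩
  have : l.length ≤ hBfin.toFinset.sup List.length :=
    Finset.le_sup (hBfin.mem_toFinset.2 hlB)
  omega

/-- The key estimate: admissible densities pair with unit flows to at least `1`. -/
lemma one_le_pairing {η : List ℕ → ℝ≥0} (hη : η ∈ T.Lambda)
    {ρ : List ℕ → ℝ≥0} (hρ : ρ ∈ T.AdmInf) :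
    1 ≤ ∑' e : T.Edge, (η e.1 : ℝ≥0∞) * (ρ e.1 : ℝ≥0∞) := by
  by_contra hcon
  push_neg at hcon
  obtain ⟨c, hc1, hc2⟩ := exists_between hcon
  obtain ⟨n, hn⟩ := T.exists_good_level hρ hc2
  have key : c ≤ ∑' e : T.Edge, (η e.1 : ℝ≥0∞) * (ρ e.1 : ℝ≥0∞) := by
    calc c = c * 1 := (mul_one c).symm
      _ = c * ∑' l : {l : List ℕ // T.mem l ∧ l.length = n + 1}, (η l.1 : ℝ≥0∞) := by
          rw [T.shell_sum hη n]
      _ = ∑' l : {l : List ℕ // T.mem l ∧ l.length = n + 1}, c * (η l.1 : ℝ≥0∞) :=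
          (ENNReal.tsum_mul_left).symm
      _ ≤ ∑' l : {l : List ℕ // T.mem l ∧ l.length = n + 1},
            (η l.1 : ℝ≥0∞) * lenFin ρ l.1 := by
          refine ENNReal.tsum_le_tsum fun l => ?_
          rw [mul_comm]
          exact mul_le_mul_right (hn l.1 l.2.1 l.2.2) _
      _ = ∑ k ∈ Finset.range (n + 1),
            ∑' l : {l : List ℕ // T.mem l ∧ l.length = k + 1},
              (η l.1 : ℝ≥0∞) * (ρ l.1 : ℝ≥0∞) := T.shell_lenFin_sum hη ρ n
      _ ≤ ∑' k : ℕ, ∑' l : {l : List ℕ // T.mem l ∧ l.length = k + 1},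
              (η l.1 : ℝ≥0∞) * (ρ l.1 : ℝ≥0∞) :=
          ENNReal.sum_le_tsum _
      _ = ∑' e : T.Edge, (η e.1 : ℝ≥0∞) * (ρ e.1 : ℝ≥0∞) :=
          (T.edge_tsum fun l => (η l : ℝ≥0∞) * (ρ l : ℝ≥0∞)).symm
  exact absurd (lt_of_le_of_lt key hc1) (lt_irrefl _)

end PTree

end Main

/-- lower bounds for the `p`-modulus coming from `η ∈ Λ`, for
`p ∈ (1,∞)`, `p = 1` and `p = ∞`. -/
theorem stmt7 (T : PTree) (σ : List ℕ → ℝ≥0) (hσ : ∀ e : List ℕ, 0 < σ e)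
    (η : List ℕ → ℝ≥0) (hη : η ∈ T.Lambda) :
    (∀ p q : ℝ, 1 < p → 1 / p + 1 / q = 1 →
      (∑' e : T.Edge, (σ e.1 : ℝ≥0∞) ^ (-(q / p)) * (η e.1 : ℝ≥0∞) ^ q) ^ (-(p / q))
        ≤ T.ModInf p σ) ∧
    ((⨆ e : T.Edge, (σ e.1 : ℝ≥0∞)⁻¹ * (η e.1 : ℝ≥0∞))⁻¹ ≤ T.ModInf 1 σ) ∧
    ((∑' e : T.Edge, (σ e.1 : ℝ≥0∞)⁻¹ * (η e.1 : ℝ≥0∞))⁻¹ ≤ T.ModTop σ) := by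
  have hσ0 : ∀ l : List ℕ, (σ l : ℝ≥0∞) ≠ 0 := fun l => by
    exact_mod_cast (hσ l).ne'
  have hσt : ∀ l : List ℕ, (σ l : ℝ≥0∞) ≠ ∞ := fun l => ENNReal.coe_ne_top
  refine ⟨?_, ?_, ?_⟩
  · -- case 1 < p < ∞
    intro p q hp hpq
    have hpq' : Real.HolderConjugate p q := Real.holderConjugate_iff.2 ⟨hp, by simpa [one_div] using hpq⟩
    refine le_iInf₂ fun ρ hρ => ?_
    set A := T.energy p σ ρ with hA
    set B := ∑' e : T.Edge, (σ e.1 : ℝ≥0∞) ^ (-(q / p)) * (η e.1 : ℝ≥0∞) ^ q with hB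
    have hone : (1 : ℝ≥0∞) ≤ ∑' e : T.Edge, (η e.1 : ℝ≥0∞) * (ρ e.1 : ℝ≥0∞) :=
      T.one_le_pairing hη hρ
    have hfull : (1 : ℝ≥0∞) ≤ A ^ (1 / p) * B ^ (1 / q) := by
      refine le_trans hone (le_trans (le_of_eq ?_) (le_trans
        (tsum_holder (fun e : T.Edge => (σ e.1 : ℝ≥0∞) ^ (1 / p) * (ρ e.1 : ℝ≥0∞))
          (fun e : T.Edge => (σ e.1 : ℝ≥0∞) ^ (-(1 / p)) * (η e.1 : ℝ≥0∞)) hpq')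
        (le_of_eq ?_)))
      · refine tsum_congr fun e => ?_
        have hcancel : (σ e.1 : ℝ≥0∞) ^ (1 / p) * (σ e.1 : ℝ≥0∞) ^ (-(1 / p)) = 1 := by
          rw [← ENNReal.rpow_add _ _ (hσ0 e.1) (hσt e.1)]
          simp
        rw [mul_mul_mul_comm, hcancel, one_mul, mul_comm]
      · congr 1
        · congr 1
          refine tsum_congr fun e => ?_
          rw [ENNReal.mul_rpow_of_nonneg _ _ (le_of_lt hpq'.pos), ← ENNReal.rpow_mul]
          have : 1 / p * p = 1 := by field_simp
          rw [this, ENNReal.rpow_one]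
        · congr 1
          refine tsum_congr fun e => ?_
          rw [ENNReal.mul_rpow_of_nonneg _ _ (le_of_lt hpq'.symm.pos), ← ENNReal.rpow_mul]
          have : -(1 / p) * q = -(q / p) := by ring
          rw [this]
    have hpq_pos : 0 < p / q := div_pos hpq'.pos hpq'.symm.pos
    rcases eq_or_ne B ∞ with hBt | hBt
    · rw [hBt, ENNReal.top_rpow_of_neg (by linarith)]
      exact zero_le
    rcases eq_or_ne B 0 with hB0 | hB0
    · exfalso
      rw [hB0, ENNReal.zero_rpow_of_pos (one_div_pos.mpr hpq'.symm.pos), mul_zero] at hfull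
      simp at hfull
    have h2 : B ^ (-(1 / q)) ≤ A ^ (1 / p) := by
      calc B ^ (-(1 / q)) = B ^ (-(1 / q)) * 1 := (mul_one _).symm
        _ ≤ B ^ (-(1 / q)) * (A ^ (1 / p) * B ^ (1 / q)) := mul_le_mul_right hfull _
        _ = A ^ (1 / p) * (B ^ (-(1 / q)) * B ^ (1 / q)) := by ring
        _ = A ^ (1 / p) := by
            rw [← ENNReal.rpow_add _ _ hB0 hBt]
            simp
    have h3 := ENNReal.rpow_le_rpow h2 (le_of_lt hpq'.pos)
    rw [← ENNReal.rpow_mul, ← ENNReal.rpow_mul] at h3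
    have e1 : -(1 / q) * p = -(p / q) := by ring
    have e2 : 1 / p * p = 1 := by field_simp
    rw [e1, e2, ENNReal.rpow_one] at h3
    exact h3
  · -- case p = 1
    refine le_iInf₂ fun ρ hρ => ?_
    set s := ⨆ e : T.Edge, (σ e.1 : ℝ≥0∞)⁻¹ * (η e.1 : ℝ≥0∞) with hs
    have hE : T.energy 1 σ ρ = ∑' e : T.Edge, (σ e.1 : ℝ≥0∞) * (ρ e.1 : ℝ≥0∞) :=
      tsum_congr fun e => by rw [ENNReal.rpow_one]
    have hone : (1 : ℝ≥0∞) ≤ T.energy 1 σ ρ * s := by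
      refine le_trans (T.one_le_pairing hη hρ) ?_
      rw [hE, ← ENNReal.tsum_mul_right]
      refine ENNReal.tsum_le_tsum fun e => ?_
      have hη' : (η e.1 : ℝ≥0∞) = (σ e.1 : ℝ≥0∞) * ((σ e.1 : ℝ≥0∞)⁻¹ * (η e.1 : ℝ≥0∞)) := by
        rw [← mul_assoc, ENNReal.mul_inv_cancel (hσ0 e.1) (hσt e.1), one_mul]
      calc (η e.1 : ℝ≥0∞) * (ρ e.1 : ℝ≥0∞)
          = (σ e.1 : ℝ≥0∞) * (ρ e.1 : ℝ≥0∞) * ((σ e.1 : ℝ≥0∞)⁻¹ * (η e.1 : ℝ≥0∞)) := by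
            conv_lhs => rw [hη']
            ring
        _ ≤ (σ e.1 : ℝ≥0∞) * (ρ e.1 : ℝ≥0∞) * s :=
            mul_le_mul_right (le_iSup (fun e : T.Edge =>
              (σ e.1 : ℝ≥0∞)⁻¹ * (η e.1 : ℝ≥0∞)) e) _
    rcases eq_or_ne s ∞ with hst | hst
    · rw [hst, ENNReal.inv_top]
      exact zero_le
    rcases eq_or_ne s 0 with hs0 | hs0
    · exfalso
      rw [hs0, mul_zero] at hone
      simp at hone
    calc s⁻¹ = s⁻¹ * 1 := (mul_one _).symm
      _ ≤ s⁻¹ * (T.energy 1 σ ρ * s) := mul_le_mul_right hone _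
      _ = T.energy 1 σ ρ * (s⁻¹ * s) := by ring
      _ = T.energy 1 σ ρ := by rw [ENNReal.inv_mul_cancel hs0 hst, mul_one]
  · -- case p = ∞
    refine le_iInf₂ fun ρ hρ => ?_
    set t := ∑' e : T.Edge, (σ e.1 : ℝ≥0∞)⁻¹ * (η e.1 : ℝ≥0∞) with ht
    have hone : (1 : ℝ≥0∞) ≤ t * T.energyTop σ ρ := by
      refine le_trans (T.one_le_pairing hη hρ) ?_
      rw [ht, ← ENNReal.tsum_mul_right]
      refine ENNReal.tsum_le_tsum fun e => ?_
      have hη' : (η e.1 : ℝ≥0∞) = (σ e.1 : ℝ≥0∞)⁻¹ * (η e.1 : ℝ≥0∞) * (σ e.1 : ℝ≥0∞) := by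
        rw [mul_comm ((σ e.1 : ℝ≥0∞)⁻¹) _, mul_assoc,
          ENNReal.inv_mul_cancel (hσ0 e.1) (hσt e.1), mul_one]
      calc (η e.1 : ℝ≥0∞) * (ρ e.1 : ℝ≥0∞)
          = (σ e.1 : ℝ≥0∞)⁻¹ * (η e.1 : ℝ≥0∞) * ((σ e.1 : ℝ≥0∞) * (ρ e.1 : ℝ≥0∞)) := by
            conv_lhs => rw [hη']
            ring
        _ ≤ (σ e.1 : ℝ≥0∞)⁻¹ * (η e.1 : ℝ≥0∞) * T.energyTop σ ρ :=
            mul_le_mul_right (le_iSup (fun e : T.Edge =>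
              (σ e.1 : ℝ≥0∞) * (ρ e.1 : ℝ≥0∞)) e) _
    rcases eq_or_ne t ∞ with htt | htt
    · rw [htt, ENNReal.inv_top]
      exact zero_le
    rcases eq_or_ne t 0 with ht0 | ht0
    · exfalso
      rw [ht0, zero_mul] at hone
      simp at hone
    calc t⁻¹ = t⁻¹ * 1 := (mul_one _).symm
      _ ≤ t⁻¹ * (t * T.energyTop σ ρ) := mul_le_mul_right hone _
      _ = T.energyTop σ ρ * (t⁻¹ * t) := by ring
      _ = T.energyTop σ ρ := by rw [ENNReal.inv_mul_cancel ht0 htt, mul_one]
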